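/- Iterated greedy matching extracts a maximum set of pairwise non-overlapping occurrences: let t be a trace and q a simple pattern of length p. Repeatedly apply greedy matching (skip-till-next-match) to the suffix of t strictly after the last event of the previous match, collecting occurrences Occ_1, Occ_2, ..., Occ_r until no further match exists. Then Occ_1, ..., Occ_r are pairwise non-overlapping in time, and r equals the maximum cardinality of any set of pairwise non-overlapping occurrences of q in t. -/

import Mathlib

structure Event where
  type : ℕ
  ts : ℤ
deriving DecidableEq

/-- Greedy (skip-till-next-match) matching, returning the match together with the suffix
of the trace strictly after the last matched event. -/
def greedyMatch' : List Event → List ℕ → Option (List Event × List Event)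
  | t, [] => some ([], t)
  | [], _ :: _ => none
  | ev :: evs, a :: as =>
    if ev.type = a then (greedyMatch' evs as).map (fun p => (ev :: p.1, p.2))
    else greedyMatch' evs (a :: as)

/-- Iterated greedy matching (with enough fuel): repeatedly apply greedy matching to the
suffix strictly after the last event of the previous match. -/
def iterGreedyAux (q : List ℕ) : ℕ → List Event → List (List Event)
  | 0, _ => []
  | fuel + 1, t =>
    match greedyMatch' t q with
    | none => []
    | some (ms, rest) => ms :: iterGreedyAux q fuel rest

def iterGreedy (q : List ℕ) (t : List Event) : List (List Event) :=
  iterGreedyAux q (t.length + 1) t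

/-- Two occurrences are non-overlapping in time iff the last event of one has smaller
timestamp than the first event of the other. -/
def NonOverlapL (O1 O2 : List Event) : Prop :=
  ∃ h1 : O1 ≠ [], ∃ h2 : O2 ≠ [],
    (O1.getLast h1).ts < (O2.head h2).ts ∨ (O2.getLast h2).ts < (O1.head h1).ts

/- ### Auxiliary lemmas -/

abbrev ltts : Event → Event → Prop := fun e1 e2 => e1.ts < e2.ts

theorem nonOverlapL_symm {O1 O2 : List Event} (h : NonOverlapL O1 O2) : NonOverlapL O2 O1 := by
  obtain ⟨h1, h2, h3⟩ := h
  exact ⟨h2, h1, h3.symm⟩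

/-- Correctness of greedy matching. -/
theorem greedy_corr : ∀ (t : List Event) (q : List ℕ) (ms rest : List Event),
    greedyMatch' t q = some (ms, rest) →
    ∃ pre, t = pre ++ rest ∧ ms.Sublist pre ∧ ms.map Event.type = q ∧
      (ms = [] → pre = []) ∧
      (∀ _ : ms ≠ [], ∃ h' : pre ≠ [], ∀ hm, ms.getLast hm = pre.getLast h') := by
  intro t
  induction t with
  | nil =>
    intro q ms rest h
    cases q with
    | nil =>
      simp [greedyMatch'] at h
      obtain ⟨h1, h2⟩ := h
      subst h1; subst h2
      exact ⟨[], by simp⟩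
    | cons a as => simp [greedyMatch'] at h
  | cons ev evs ih =>
    intro q ms rest h
    cases q with
    | nil =>
      simp [greedyMatch'] at h
      obtain ⟨h1, h2⟩ := h
      subst h1; subst h2
      exact ⟨[], by simp⟩
    | cons a as =>
      by_cases hty : ev.type = a
      · simp only [greedyMatch', hty, if_pos] at h
        rw [Option.map_eq_some_iff] at h
        obtain ⟨⟨p1, p2⟩, hp, heq⟩ := h
        simp only [Prod.mk.injEq] at heq
        obtain ⟨hms, hrest⟩ := heq
        obtain ⟨pre', he, hsub, hmap, hnil, hlast⟩ := ih as p1 p2 hp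
        subst hms; subst hrest; subst he
        refine ⟨ev :: pre', rfl, List.Sublist.cons₂ ev hsub, by simp [hty, hmap], by simp, ?_⟩
        intro _
        refine ⟨by simp, ?_⟩
        intro hm
        by_cases hp1 : p1 = []
        · subst hp1
          have : pre' = [] := hnil rfl
          subst this
          simp
        · obtain ⟨hpre', hl⟩ := hlast hp1
          rw [List.getLast_cons hp1, List.getLast_cons hpre']
          exact hl hp1
      · simp only [greedyMatch', hty, if_neg, if_false] at h
        obtain ⟨pre', he, hsub, hmap, _, hlast⟩ := ih (a :: as) ms rest h
        have hmsne : ms ≠ [] := by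
          intro hms; rw [hms] at hmap; simp at hmap
        subst he
        refine ⟨ev :: pre', rfl, hsub.trans (List.sublist_cons_self ev pre'), hmap,
          fun hms => absurd hms hmsne, ?_⟩
        intro _
        obtain ⟨hpre', hl⟩ := hlast hmsne
        refine ⟨by simp, ?_⟩
        intro hm
        rw [List.getLast_cons hpre']
        exact hl hm

/-- Greedy dominance: if there is an occurrence, greedy succeeds and its events are
pointwise no later. -/
theorem greedy_dom : ∀ (t : List Event), t.Pairwise ltts →
    ∀ (q : List ℕ) (O : List Event), O.Sublist t → O.map Event.type = q →
    ∃ ms rest, greedyMatch' t q = some (ms, rest) ∧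
      List.Forall₂ (fun m o => m.ts ≤ o.ts) ms O := by
  intro t
  induction t with
  | nil =>
    intro _ q O hsub hmap
    have : O = [] := List.sublist_nil.mp hsub
    subst this
    simp at hmap
    subst hmap
    exact ⟨[], [], rfl, List.Forall₂.nil⟩
  | cons ev evs ih =>
    intro hpw q O hsub hmap
    rw [List.pairwise_cons] at hpw
    obtain ⟨hev, hpw'⟩ := hpw
    cases q with
    | nil =>
      have : O = [] := by cases O <;> simp_all
      subst this
      exact ⟨[], ev :: evs, rfl, List.Forall₂.nil⟩
    | cons a as =>
      cases O with
      | nil => simp at hmap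
      | cons o os =>
        simp only [List.map_cons, List.cons.injEq] at hmap
        obtain ⟨hoa, hosmap⟩ := hmap
        by_cases hty : ev.type = a
        · cases hsub with
          | cons _ hsub' =>
            -- o :: os <+ evs
            have hos : os.Sublist evs := (List.sublist_cons_self o os).trans hsub'
            obtain ⟨ms', rest', hg, hf⟩ := ih hpw' as os hos hosmap
            refine ⟨ev :: ms', rest', ?_, ?_⟩
            · simp [greedyMatch', hty, hg]
            · exact List.Forall₂.cons (le_of_lt (hev o (hsub'.subset (by simp)))) hf
          | cons_cons _ hsub' =>
            obtain ⟨ms', rest', hg, hf⟩ := ih hpw' as os hsub' hosmap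
            refine ⟨ev :: ms', rest', ?_, List.Forall₂.cons le_rfl hf⟩
            simp [greedyMatch', hty, hg]
        · cases hsub with
          | cons _ hsub' =>
            obtain ⟨ms', rest', hg, hf⟩ := ih hpw' (a :: as) (o :: os) hsub'
              (by simp [hoa, hosmap])
            refine ⟨ms', rest', ?_, hf⟩
            simp [greedyMatch', hty, hg]
          | cons_cons _ hsub' =>
            exact absurd hoa hty

/-- A sublist of `pre ++ rest` all of whose elements are later than all of `pre`
is a sublist of `rest`. -/
theorem sublist_of_late : ∀ (pre rest O : List Event), O.Sublist (pre ++ rest) →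
    (∀ a ∈ pre, ∀ e ∈ O, a.ts < e.ts) → O.Sublist rest := by
  intro pre
  induction pre with
  | nil => intro rest O h _; simpa using h
  | cons p pre' ih =>
    intro rest O h hlt
    cases h with
    | cons _ h' => exact ih rest O h' (fun a ha e he => hlt a (by simp [ha]) e he)
    | cons_cons _ h' =>
      exact absurd (hlt p (by simp) p (by simp)) (lt_irrefl _)

theorem mem_ts_le_getLast : ∀ (l : List Event), l.Pairwise ltts →
    ∀ a ∈ l, ∀ h : l ≠ [], a.ts ≤ (l.getLast h).ts := by
  intro l
  induction l with
  | nil => simp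
  | cons b tl ih =>
    intro hpw a ha h
    rw [List.pairwise_cons] at hpw
    cases tl with
    | nil => simp at ha; subst ha; simp
    | cons c tl' =>
      rw [List.getLast_cons (by simp)]
      rcases List.mem_cons.mp ha with h1 | h2
      · subst h1
        exact le_of_lt (hpw.1 _ (List.getLast_mem _))
      · exact ih hpw.2 a h2 (by simp)

theorem head_ts_le_mem : ∀ (l : List Event), l.Pairwise ltts →
    ∀ a ∈ l, ∀ h : l ≠ [], (l.head h).ts ≤ a.ts := by
  intro l
  induction l with
  | nil => simp
  | cons b tl _ =>
    intro hpw a ha _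
    rw [List.pairwise_cons] at hpw
    rcases List.mem_cons.mp ha with h1 | h2
    · subst h1; simp
    · exact le_of_lt (hpw.1 a h2)

theorem forall₂_getLast {R : Event → Event → Prop} :
    ∀ {l1 l2 : List Event}, List.Forall₂ R l1 l2 → ∀ h1 : l1 ≠ [],
      ∃ h2 : l2 ≠ [], R (l1.getLast h1) (l2.getLast h2) := by
  intro l1 l2 h
  induction h with
  | nil => simp
  | @cons a b l1' l2' hab htl ih =>
    intro _
    cases l1' with
    | nil =>
      cases htl
      exact ⟨by simp, by simpa using hab⟩
    | cons x xs =>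
      cases l2' with
      | nil => cases htl
      | cons y ys =>
        obtain ⟨h2, hr⟩ := ih (by simp)
        refine ⟨by simp, ?_⟩
        rw [List.getLast_cons_cons, List.getLast_cons_cons]
        exact hr

/-- Every extracted occurrence is an occurrence. -/
theorem iterGreedyAux_occ (q : List ℕ) : ∀ (fuel : ℕ) (t : List Event),
    ∀ O ∈ iterGreedyAux q fuel t, O.Sublist t ∧ O.map Event.type = q := by
  intro fuel
  induction fuel with
  | zero => simp [iterGreedyAux]
  | succ f ih =>
    intro t O hO
    simp only [iterGreedyAux] at hO
    cases hg : greedyMatch' t q with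
    | none => rw [hg] at hO; simp at hO
    | some p =>
      obtain ⟨ms, rest⟩ := p
      rw [hg] at hO
      simp only [List.mem_cons] at hO
      obtain ⟨pre, he, hsub, hmap, _, _⟩ := greedy_corr t q ms rest hg
      rcases hO with h1 | h2
      · subst h1
        exact ⟨he ▸ hsub.trans (List.sublist_append_left pre rest), hmap⟩
      · obtain ⟨hs, hm⟩ := ih rest O h2
        exact ⟨he ▸ hs.trans (List.sublist_append_right pre rest), hm⟩

/-- The extracted occurrences are pairwise non-overlapping. -/
theorem iterGreedyAux_pairwise (q : List ℕ) (hq : q ≠ []) : ∀ (fuel : ℕ) (t : List Event),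
    t.Pairwise ltts → (iterGreedyAux q fuel t).Pairwise NonOverlapL := by
  intro fuel
  induction fuel with
  | zero => simp [iterGreedyAux]
  | succ f ih =>
    intro t hpw
    simp only [iterGreedyAux]
    cases hg : greedyMatch' t q with
    | none => simp
    | some p =>
      obtain ⟨ms, rest⟩ := p
      obtain ⟨pre, he, hsub, hmap, _, hlast⟩ := greedy_corr t q ms rest hg
      have hmsne : ms ≠ [] := by intro h; rw [h] at hmap; exact hq hmap.symm
      have hrestpw : rest.Pairwise ltts :=
        (he ▸ hpw).sublist (List.sublist_append_right pre rest)
      refine List.Pairwise.cons ?_ (ih rest hrestpw)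
      intro O hO
      obtain ⟨hOs, hOm⟩ := iterGreedyAux_occ q f rest O hO
      have hOne : O ≠ [] := by intro h; rw [h] at hOm; exact hq hOm.symm
      refine ⟨hmsne, hOne, Or.inl ?_⟩
      obtain ⟨hprene, hle⟩ := hlast hmsne
      rw [hle hmsne]
      have hcross : ∀ a ∈ pre, ∀ b ∈ rest, a.ts < b.ts := by
        have := he ▸ hpw
        rw [List.pairwise_append] at this
        exact this.2.2
      exact hcross _ (List.getLast_mem hprene) _ (hOs.subset (List.head_mem hOne))

/-- Fuel invariance. -/
theorem iterGreedyAux_fuel (q : List ℕ) (hq : q ≠ []) : ∀ (n : ℕ) (t : List Event)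
    (f1 f2 : ℕ), t.length ≤ n → t.length < f1 → t.length < f2 →
    iterGreedyAux q f1 t = iterGreedyAux q f2 t := by
  intro n
  induction n with
  | zero =>
    intro t f1 f2 hn h1 h2
    have ht : t = [] := List.length_eq_zero_iff.mp (Nat.le_zero.mp hn)
    subst ht
    obtain ⟨f1', rfl⟩ := Nat.exists_eq_succ_of_ne_zero (by omega : f1 ≠ 0)
    obtain ⟨f2', rfl⟩ := Nat.exists_eq_succ_of_ne_zero (by omega : f2 ≠ 0)
    obtain ⟨a, as, rfl⟩ : ∃ a as, q = a :: as := by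
      cases q with
      | nil => exact absurd rfl hq
      | cons a as => exact ⟨a, as, rfl⟩
    simp [iterGreedyAux, greedyMatch']
  | succ m ih =>
    intro t f1 f2 hn h1 h2
    obtain ⟨f1', rfl⟩ := Nat.exists_eq_succ_of_ne_zero (by omega : f1 ≠ 0)
    obtain ⟨f2', rfl⟩ := Nat.exists_eq_succ_of_ne_zero (by omega : f2 ≠ 0)
    simp only [iterGreedyAux]
    cases hg : greedyMatch' t q with
    | none => rfl
    | some p =>
      obtain ⟨ms, rest⟩ := p
      obtain ⟨pre, he, hsub, hmap, _, hlast⟩ := greedy_corr t q ms rest hg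
      have hmsne : ms ≠ [] := by intro h; rw [h] at hmap; exact hq hmap.symm
      have hprene : pre ≠ [] := (hlast hmsne).1
      have hlen : rest.length < t.length := by
        rw [he, List.length_append]
        have : 0 < pre.length := List.length_pos_iff.mpr hprene
        omega
      have := ih rest f1' f2' (by omega) (by omega) (by omega)
      simp [this]

theorem iterGreedyAux_eq_iterGreedy (q : List ℕ) (hq : q ≠ []) (t : List Event) (f : ℕ)
    (hf : t.length < f) : iterGreedyAux q f t = iterGreedy q t :=
  iterGreedyAux_fuel q hq t.length t f (t.length + 1) le_rfl hf (by omega)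

private def lastTs (O : List Event) : ℤ :=
  (O.getLast?.map Event.ts).getD 0

theorem lastTs_eq (O : List Event) (h : O ≠ []) : lastTs O = (O.getLast h).ts := by
  unfold lastTs
  rw [List.getLast?_eq_getLast_of_ne_nil h]
  rfl

/-- Maximality. -/
theorem iterGreedy_max (q : List ℕ) (hq : q ≠ []) : ∀ (n : ℕ) (t : List Event),
    t.length ≤ n → t.Pairwise ltts →
    ∀ S : List (List Event), S.Pairwise NonOverlapL →
    (∀ O ∈ S, O.Sublist t ∧ O.map Event.type = q) →
    S.length ≤ (iterGreedy q t).length := by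
  intro n
  induction n with
  | zero =>
    intro t hn _ S hSpw hSocc
    have ht : t = [] := List.length_eq_zero_iff.mp (Nat.le_zero.mp hn)
    subst ht
    cases S with
    | nil => simp
    | cons O S' =>
      obtain ⟨hs, hm⟩ := hSocc O (by simp)
      have : O = [] := List.sublist_nil.mp hs
      rw [this] at hm
      exact absurd hm.symm hq
  | succ m ih =>
    intro t hn hpw S hSpw hSocc
    cases hS : S with
    | nil => simp
    | cons O1 Stl =>
      subst hS
      -- pick the occurrence with minimal last timestamp
      obtain ⟨O₀, hO₀⟩ : ∃ O₀, O₀ ∈ List.argmin lastTs (O1 :: Stl) := by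
        cases hA : List.argmin lastTs (O1 :: Stl) with
        | none => exact absurd hA (by simp [List.argmin_eq_none])
        | some x => exact ⟨x, by simp [hA]⟩
      have hO₀mem : O₀ ∈ O1 :: Stl := List.argmin_mem hO₀
      have hO₀min : ∀ O ∈ O1 :: Stl, lastTs O₀ ≤ lastTs O :=
        fun O hO => List.le_of_mem_argmin hO hO₀
      obtain ⟨hO₀sub, hO₀map⟩ := hSocc O₀ hO₀mem
      have hO₀ne : O₀ ≠ [] := by intro h; rw [h] at hO₀map; exact hq hO₀map.symm
      -- greedy succeeds
      obtain ⟨ms, rest, hg, hf⟩ := greedy_dom t hpw q O₀ hO₀sub hO₀map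
      obtain ⟨pre, he, hsub, hmap, _, hlast⟩ := greedy_corr t q ms rest hg
      have hmsne : ms ≠ [] := by intro h; rw [h] at hmap; exact hq hmap.symm
      have hprene : pre ≠ [] := (hlast hmsne).1
      have hlenr : rest.length < t.length := by
        rw [he, List.length_append]
        have : 0 < pre.length := List.length_pos_iff.mpr hprene
        omega
      have htne : t ≠ [] := by
        intro h; subst h; simp at hlenr
      -- last of ms is ≤ last of O₀
      obtain ⟨_, hmsO₀⟩ := forall₂_getLast hf hmsne
      -- set up the permuted list
      obtain ⟨E, hperm⟩ : ∃ E, (O1 :: Stl).Perm (O₀ :: E) :=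
        ⟨_, List.perm_cons_erase hO₀mem⟩
      have hpermpw : (O₀ :: E).Pairwise NonOverlapL :=
        (hperm.pairwise_iff (fun h => nonOverlapL_symm h)).mp hSpw
      rw [List.pairwise_cons] at hpermpw
      obtain ⟨hrel, herasepw⟩ := hpermpw
      have heraseocc : ∀ O ∈ E, O.Sublist rest ∧ O.map Event.type = q := by
        intro O hO
        have hOS : O ∈ O1 :: Stl := hperm.symm.subset (List.mem_cons_of_mem _ hO)
        obtain ⟨hOsub, hOmap⟩ := hSocc O hOS
        have hOne : O ≠ [] := by intro h; rw [h] at hOmap; exact hq hOmap.symm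
        refine ⟨?_, hOmap⟩
        -- last O₀ < head O
        have hno := hrel O hO
        obtain ⟨h1, h2, h3⟩ := hno
        have hOpw : O.Pairwise ltts := hpw.sublist hOsub
        have hO₀pw : O₀.Pairwise ltts := hpw.sublist hO₀sub
        have hlthead : (O₀.getLast h1).ts < (O.head h2).ts := by
          rcases h3 with h | h
          · exact h
          · exfalso
            have hheadle : (O₀.head h1).ts ≤ (O₀.getLast h1).ts :=
              head_ts_le_mem O₀ hO₀pw _ (List.getLast_mem h1) h1
            have hmin : lastTs O₀ ≤ lastTs O := hO₀min O hOS
            rw [lastTs_eq O₀ h1, lastTs_eq O h2] at hmin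
            omega
        -- all elements of pre are earlier than all of O
        apply sublist_of_late pre rest O (he ▸ hOsub)
        intro a ha e heO
        have h1' : a.ts ≤ (pre.getLast hprene).ts :=
          mem_ts_le_getLast pre ((he ▸ hpw).sublist (List.sublist_append_left pre rest)) a ha hprene
        have h2' : (ms.getLast hmsne).ts = (pre.getLast hprene).ts := by
          rw [(hlast hmsne).2 hmsne]
        have h3' : (O.head h2).ts ≤ e.ts := head_ts_le_mem O hOpw e heO h2
        omega
      -- apply IH to rest
      have hrestpw : rest.Pairwise ltts :=
        (he ▸ hpw).sublist (List.sublist_append_right pre rest)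
      have hIH := ih rest (by omega) hrestpw E herasepw heraseocc
      -- compute lengths
      have hlenS : (O1 :: Stl).length = E.length + 1 := by
        rw [hperm.length_eq]; simp
      have hiter : iterGreedy q t = ms :: iterGreedyAux q t.length rest := by
        unfold iterGreedy
        simp only [iterGreedyAux, hg]
      rw [hiter, hlenS]
      simp only [List.length_cons]
      have : iterGreedyAux q t.length rest = iterGreedy q rest :=
        iterGreedyAux_eq_iterGreedy q hq rest t.length hlenr
      rw [this]
      omega

/-- The occurrences extracted by iterated greedy matching are pairwise
non-overlapping occurrences of `q` in `t`, and their number equals the maximum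
cardinality of any set of pairwise non-overlapping occurrences of `q` in `t`. -/
theorem stmt10 (t : List Event) (ht : t.Chain' (fun e1 e2 => e1.ts < e2.ts))
    (q : List ℕ) (hq : 1 ≤ q.length) :
    (iterGreedy q t).Pairwise NonOverlapL ∧
    (∀ O ∈ iterGreedy q t, O.Sublist t ∧ O.map Event.type = q) ∧
    (∀ S : List (List Event), S.Pairwise NonOverlapL →
      (∀ O ∈ S, O.Sublist t ∧ O.map Event.type = q) →
      S.length ≤ (iterGreedy q t).length) := by
  haveI : IsTrans Event ltts := ⟨fun _ _ _ h1 h2 => lt_trans h1 h2⟩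
  have hpw : t.Pairwise ltts := List.isChain_iff_pairwise.mp ht
  have hqne : q ≠ [] := List.ne_nil_of_length_pos (by omega)
  refine ⟨iterGreedyAux_pairwise q hqne _ t hpw,
    iterGreedyAux_occ q _ t,
    fun S hSpw hSocc => iterGreedy_max q hqne t.length t le_rfl hpw S hSpw hSocc⟩
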